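/- arXiv:1302.3903 — 4 statements merged into one kernel-verified Lean document; each statement's English description precedes it below -/
import Mathlib

section
/- Let 1 < p < ∞ and let c(p) = tan(π/(2p)) if p ≤ 2 and c(p) = cot(π/(2p)) if p > 2. Let H : L^p(ℝ, ℂ) → L^p(ℝ, ℂ) be a continuous linear map with ‖H g‖_p ≤ c(p) ‖g‖_p for all g. Let 0 < m ≤ M and let K, K̃ : ℝ → ℂ be measurable functions with Re K(y) ≥ m, Re K̃(y) ≥ m, |K(y)| ≤ M and |K̃(y)| ≤ M for almost every y, whose principal logarithms L = Log K and L̃ = Log K̃ lie in L^p(ℝ, ℂ). Let h and h̃ be measurable representatives of H L and H L̃ respectively and assume |Im h(y)| ≤ c(p)π and |Im h̃(y)| ≤ c(p)π almost everywhere. Define the factors K₊(y) = exp((1/2)L(y) + (i/2)h(y)) and K̃₊(y) = exp((1/2)L̃(y) + (i/2)h̃(y)) (and analogously K₋, K̃₋ with minus signs). If ‖K − K̃‖_p ≤ ε, then ‖K₊ − K̃₊‖_p ≤ (M^{1/2} exp(c(p)π/2)/(2m)) (1 + c(p)) ε, and the same bound holds for ‖K₋ − K̃₋‖_p. -/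
open MeasureTheory Real Complex

/-- The best constant in the Titchmarsh–Riesz theorem. -/
noncomputable def TRconst (p : ℝ) : ℝ :=
  if p ≤ 2 then Real.tan (Real.pi / (2 * p)) else Real.cot (Real.pi / (2 * p))

lemma TRconst_nonneg {p : ℝ} (hp : 1 < p) : 0 ≤ TRconst p := by
  have hp0 : 0 < p := lt_trans one_pos hp
  have hx0 : 0 < Real.pi / (2 * p) := div_pos Real.pi_pos (by linarith)
  have hx2 : Real.pi / (2 * p) < Real.pi / 2 :=
    div_lt_div_of_pos_left Real.pi_pos two_pos (by linarith)
  unfold TRconst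
  split_ifs with h2
  · exact (Real.tan_pos_of_pos_of_lt_pi_div_two hx0 hx2).le
  · rw [Real.cot_eq_cos_div_sin]
    apply div_nonneg
    · exact Real.cos_nonneg_of_mem_Icc ⟨by linarith, hx2.le⟩
    · exact (Real.sin_pos_of_pos_of_lt_pi hx0 (hx2.trans (by linarith [Real.pi_pos]))).le


lemma logLip {m : ℝ} (hm : 0 < m) {z w : ℂ} (hz : m ≤ z.re) (hw : m ≤ w.re) :
    ‖Complex.log z - Complex.log w‖ ≤ m⁻¹ * ‖z - w‖ := by
  have hs : Convex ℝ {c : ℂ | m ≤ c.re} := convex_halfSpace_re_ge m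
  have hd : ∀ x ∈ {c : ℂ | m ≤ c.re}, HasFDerivWithinAt Complex.log
      (((1 : ℂ →L[ℂ] ℂ).smulRight x⁻¹).restrictScalars ℝ) {c : ℂ | m ≤ c.re} x := by
    intro x hx
    have : x ∈ Complex.slitPlane := Or.inl (lt_of_lt_of_le hm hx)
    exact ((Complex.hasDerivAt_log this).hasFDerivAt.restrictScalars ℝ).hasFDerivWithinAt
  have hbound : ∀ x ∈ {c : ℂ | m ≤ c.re},
      ‖((1 : ℂ →L[ℂ] ℂ).smulRight x⁻¹).restrictScalars ℝ‖ ≤ m⁻¹ := by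
    intro x hx
    rw [ContinuousLinearMap.norm_restrictScalars, ContinuousLinearMap.norm_smulRight_apply,
      norm_one]
    have hx0 : m ≤ ‖x‖ := hx.trans (Complex.re_le_norm x)
    rw [one_mul, norm_inv]
    exact inv_anti₀ hm hx0
  exact hs.norm_image_sub_le_of_norm_hasFDerivWithin_le hd hbound hw hz

lemma expDiff (a b : ℂ) :
    ‖Complex.exp a - Complex.exp b‖ ≤ max (Real.exp a.re) (Real.exp b.re) * ‖a - b‖ := by
  have hs : Convex ℝ (segment ℝ b a) := convex_segment b a
  have hd : ∀ x ∈ segment ℝ b a, HasFDerivWithinAt Complex.exp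
      (((1 : ℂ →L[ℂ] ℂ).smulRight (Complex.exp x)).restrictScalars ℝ) (segment ℝ b a) x :=
    fun x _ => ((Complex.hasDerivAt_exp x).hasFDerivAt.restrictScalars ℝ).hasFDerivWithinAt
  have hbound : ∀ x ∈ segment ℝ b a,
      ‖((1 : ℂ →L[ℂ] ℂ).smulRight (Complex.exp x)).restrictScalars ℝ‖ ≤
        max (Real.exp a.re) (Real.exp b.re) := by
    rintro x ⟨u, v, hu, hv, huv, rfl⟩
    rw [ContinuousLinearMap.norm_restrictScalars, ContinuousLinearMap.norm_smulRight_apply,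
      norm_one, one_mul, Complex.norm_exp]
    have hre : (u • b + v • a).re = u * b.re + v * a.re := by simp
    rw [hre]
    have h2 : u * b.re + v * a.re ≤ max a.re b.re := by
      calc u * b.re + v * a.re ≤ u * max a.re b.re + v * max a.re b.re := by
            gcongr
            · exact le_max_right _ _
            · exact le_max_left _ _
        _ = max a.re b.re := by rw [← add_mul, huv, one_mul]
    calc Real.exp (u * b.re + v * a.re) ≤ Real.exp (max a.re b.re) := Real.exp_le_exp.2 h2
      _ ≤ max (Real.exp a.re) (Real.exp b.re) := by
          rcases max_cases a.re b.re with ⟨h1, _⟩ | ⟨h1, _⟩ <;> rw [h1]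
          · exact le_max_left _ _
          · exact le_max_right _ _
  exact hs.norm_image_sub_le_of_norm_hasFDerivWithin_le hd hbound
    (left_mem_segment ℝ b a) (right_mem_segment ℝ b a)

lemma keyBound (p : ℝ) (hp1 : 1 ≤ ENNReal.ofReal p) (c : ℝ) (hc : 0 ≤ c)
    (m M : ℝ) (hm : 0 < m) (hmM : m ≤ M)
    (K K' : ℝ → ℂ) (hKmeas : Measurable K) (hK'meas : Measurable K')
    (hKlow : ∀ᵐ y : ℝ, m ≤ (K y).re) (hK'low : ∀ᵐ y : ℝ, m ≤ (K' y).re)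
    (hKup : ∀ᵐ y : ℝ, ‖K y‖ ≤ M) (hK'up : ∀ᵐ y : ℝ, ‖K' y‖ ≤ M)
    (h h' : ℝ → ℂ) (hhmeas : Measurable h) (hh'meas : Measurable h')
    (hhim : ∀ᵐ y : ℝ, |(h y).im| ≤ c * Real.pi)
    (hh'im : ∀ᵐ y : ℝ, |(h' y).im| ≤ c * Real.pi)
    (hΔh : eLpNorm (fun y => h y - h' y) (ENNReal.ofReal p) (volume : Measure ℝ) ≤
      ENNReal.ofReal c *
        eLpNorm (fun y => Complex.log (K y) - Complex.log (K' y)) (ENNReal.ofReal p)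
          (volume : Measure ℝ))
    (ε : ℝ)
    (hdist : eLpNorm (fun y => K y - K' y) (ENNReal.ofReal p) (volume : Measure ℝ) ≤
      ENNReal.ofReal ε) :
    eLpNorm (fun y =>
        Complex.exp ((1 / 2 : ℂ) * Complex.log (K y) + (Complex.I / 2) * h y) -
        Complex.exp ((1 / 2 : ℂ) * Complex.log (K' y) + (Complex.I / 2) * h' y))
        (ENNReal.ofReal p) (volume : Measure ℝ) ≤
      ENNReal.ofReal
        (Real.sqrt M * Real.exp (c * Real.pi / 2) / (2 * m) * (1 + c) * ε) := by
  set P := ENNReal.ofReal p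
  set D := Real.sqrt M * Real.exp (c * Real.pi / 2) with hDdef
  have hM : 0 < M := lt_of_lt_of_le hm hmM
  have hD0 : 0 ≤ D := mul_nonneg (Real.sqrt_nonneg _) (Real.exp_pos _).le
  set ΔL : ℝ → ℂ := fun y => Complex.log (K y) - Complex.log (K' y) with hΔLdef
  set Δh : ℝ → ℂ := fun y => h y - h' y with hΔhdef
  set f : ℝ → ℝ := fun y => ‖ΔL y‖ + ‖Δh y‖ with hfdef
  -- the exponential real-part bound
  have hexp : ∀ (z w : ℂ), m ≤ z.re → ‖z‖ ≤ M → |w.im| ≤ c * Real.pi →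
      Real.exp (((1/2 : ℂ) * Complex.log z + (Complex.I/2) * w).re) ≤ D := by
    intro z w hz hzM hw
    have hre : ((1/2 : ℂ) * Complex.log z + (Complex.I/2) * w).re =
        (Complex.log z).re / 2 - w.im / 2 := by
      simp [Complex.add_re, Complex.mul_re, Complex.div_re]
      ring
    rw [hre, Complex.log_re]
    have habs : 0 < ‖z‖ := lt_of_lt_of_le hm (hz.trans (Complex.re_le_norm z))
    have h1 : Real.log ‖z‖ ≤ Real.log M := Real.log_le_log habs hzM
    have h2 : -w.im ≤ c * Real.pi := (neg_le_abs _).trans hw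
    have : Real.log ‖z‖ / 2 - w.im / 2 ≤ Real.log M / 2 + c * Real.pi / 2 := by
      linarith
    calc Real.exp (Real.log ‖z‖ / 2 - w.im / 2)
        ≤ Real.exp (Real.log M / 2 + c * Real.pi / 2) := Real.exp_le_exp.2 this
      _ = Real.exp (Real.log M / 2) * Real.exp (c * Real.pi / 2) := Real.exp_add _ _
      _ = D := by
          rw [hDdef, Real.sqrt_eq_rpow, Real.rpow_def_of_pos hM]
          ring_nf
  -- pointwise bound
  have hpt : ∀ᵐ y : ℝ, ‖Complex.exp ((1/2 : ℂ) * Complex.log (K y) + (Complex.I/2) * h y) -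
      Complex.exp ((1/2 : ℂ) * Complex.log (K' y) + (Complex.I/2) * h' y)‖ ≤
      ‖((D/2) • f) y‖ := by
    filter_upwards [hKlow, hK'low, hKup, hK'up, hhim, hh'im] with y h1 h2 h3 h4 h5 h6
    set a := (1/2 : ℂ) * Complex.log (K y) + (Complex.I/2) * h y with ha
    set b := (1/2 : ℂ) * Complex.log (K' y) + (Complex.I/2) * h' y with hb
    have hab : ‖a - b‖ ≤ (1/2) * ‖ΔL y‖ + (1/2) * ‖Δh y‖ := by
      have : a - b = (1/2 : ℂ) * ΔL y + (Complex.I/2) * Δh y := by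
        rw [ha, hb, hΔLdef, hΔhdef]; ring
      rw [this]
      calc ‖(1/2 : ℂ) * ΔL y + (Complex.I/2) * Δh y‖ ≤
          ‖(1/2 : ℂ) * ΔL y‖ + ‖(Complex.I/2) * Δh y‖ := norm_add_le _ _
        _ = (1/2) * ‖ΔL y‖ + (1/2) * ‖Δh y‖ := by
            rw [norm_mul, norm_mul]
            norm_num [Complex.norm_I, norm_div]
    have hmax : max (Real.exp a.re) (Real.exp b.re) ≤ D :=
      max_le (hexp _ _ h1 h3 h5) (hexp _ _ h2 h4 h6)
    have hfy : 0 ≤ f y := add_nonneg (norm_nonneg _) (norm_nonneg _)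
    have : ‖Complex.exp a - Complex.exp b‖ ≤ D * ((1/2) * ‖ΔL y‖ + (1/2) * ‖Δh y‖) := by
      calc ‖Complex.exp a - Complex.exp b‖ ≤ max (Real.exp a.re) (Real.exp b.re) * ‖a - b‖ :=
            expDiff a b
        _ ≤ D * ((1/2) * ‖ΔL y‖ + (1/2) * ‖Δh y‖) := by
            apply mul_le_mul hmax hab (norm_nonneg _) hD0
    calc ‖Complex.exp a - Complex.exp b‖ ≤ D * ((1/2) * ‖ΔL y‖ + (1/2) * ‖Δh y‖) := this
      _ = (D/2) * f y := by rw [hfdef]; ring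
      _ ≤ ‖((D/2) • f) y‖ := by
          rw [Pi.smul_apply, smul_eq_mul, Real.norm_eq_abs]
          exact le_abs_self _
  have hΔLmeas : Measurable ΔL :=
    (Complex.measurable_log.comp hKmeas).sub (Complex.measurable_log.comp hK'meas)
  have hΔhmeas : Measurable Δh := hhmeas.sub hh'meas
  -- bound on eLpNorm ΔL
  have hX : eLpNorm ΔL P volume ≤ ENNReal.ofReal (1/m) * ENNReal.ofReal ε := by
    have hpt2 : ∀ᵐ y : ℝ, ‖ΔL y‖ ≤ ‖((1/m) • fun y => ‖K y - K' y‖) y‖ := by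
      filter_upwards [hKlow, hK'low] with y h1 h2
      rw [Pi.smul_apply, smul_eq_mul, Real.norm_eq_abs]
      calc ‖ΔL y‖ ≤ m⁻¹ * ‖K y - K' y‖ := logLip hm h1 h2
        _ = (1/m) * ‖K y - K' y‖ := by rw [one_div]
        _ ≤ |(1/m) * ‖K y - K' y‖| := le_abs_self _
    calc eLpNorm ΔL P volume ≤ eLpNorm ((1/m) • fun y => ‖K y - K' y‖) P volume :=
          eLpNorm_mono_ae hpt2
      _ = ‖(1/m)‖₊ * eLpNorm (fun y => ‖K y - K' y‖) P volume := eLpNorm_const_smul _ _ _ _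
      _ = ENNReal.ofReal (1/m) * eLpNorm (fun y => K y - K' y) P volume := by
          rw [eLpNorm_norm, ← enorm_eq_nnnorm, Real.enorm_eq_ofReal (by positivity)]
      _ ≤ ENNReal.ofReal (1/m) * ENNReal.ofReal ε := mul_le_mul_right hdist _
  -- main chain
  calc eLpNorm (fun y =>
        Complex.exp ((1/2 : ℂ) * Complex.log (K y) + (Complex.I/2) * h y) -
        Complex.exp ((1/2 : ℂ) * Complex.log (K' y) + (Complex.I/2) * h' y)) P volume
      ≤ eLpNorm ((D/2) • f) P volume := eLpNorm_mono_ae hpt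
    _ = ‖(D/2)‖₊ * eLpNorm f P volume := eLpNorm_const_smul _ _ _ _
    _ = ENNReal.ofReal (D/2) * eLpNorm f P volume := by
        rw [← enorm_eq_nnnorm, Real.enorm_eq_ofReal (by positivity)]
    _ ≤ ENNReal.ofReal (D/2) * (eLpNorm (fun y => ‖ΔL y‖) P volume +
          eLpNorm (fun y => ‖Δh y‖) P volume) := by
        apply mul_le_mul_right
        exact eLpNorm_add_le hΔLmeas.norm.aestronglyMeasurable
          hΔhmeas.norm.aestronglyMeasurable hp1
    _ = ENNReal.ofReal (D/2) * (eLpNorm ΔL P volume + eLpNorm Δh P volume) := by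
        rw [eLpNorm_norm, eLpNorm_norm]
    _ ≤ ENNReal.ofReal (D/2) * ((1 + ENNReal.ofReal c) * (ENNReal.ofReal (1/m) *
          ENNReal.ofReal ε)) := by
        apply mul_le_mul_right
        calc eLpNorm ΔL P volume + eLpNorm Δh P volume
            ≤ eLpNorm ΔL P volume + ENNReal.ofReal c * eLpNorm ΔL P volume := add_le_add_right hΔh _
          _ = (1 + ENNReal.ofReal c) * eLpNorm ΔL P volume := by ring
          _ ≤ (1 + ENNReal.ofReal c) * (ENNReal.ofReal (1/m) * ENNReal.ofReal ε) :=
              mul_le_mul_right hX _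
    _ = ENNReal.ofReal (D/2 * ((1 + c) * ((1/m) * ε))) := by
        rw [ENNReal.ofReal_mul (by positivity : (0:ℝ) ≤ D/2),
          ENNReal.ofReal_mul (by positivity : (0:ℝ) ≤ 1 + c),
          ENNReal.ofReal_mul (by positivity : (0:ℝ) ≤ 1/m),
          ENNReal.ofReal_add zero_le_one hc, ENNReal.ofReal_one]
    _ = ENNReal.ofReal (D / (2 * m) * (1 + c) * ε) := by
        congr 1; field_simp


/-- **Multiplicative bounds in `L^p` for `1 < p < ∞`**: a perturbation of size `ε` of a
Wiener–Hopf kernel `K` (with `Re K ≥ m > 0`, `|K| ≤ M` a.e.) propagates to its Wiener–Hopf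
factors `K₊ = exp((1/2)Log K + (i/2)H(Log K))`, `K₋ = exp((1/2)Log K − (i/2)H(Log K))`
with bound `(M^{1/2} exp(c(p)π/2)/(2m)) (1 + c(p)) ε`. -/
theorem multiplicative_wiener_hopf_bounds (p : ℝ) (hp : 1 < p)
    [Fact (1 ≤ ENNReal.ofReal p)]
    (H : Lp ℂ (ENNReal.ofReal p) (volume : Measure ℝ) →L[ℂ]
         Lp ℂ (ENNReal.ofReal p) (volume : Measure ℝ))
    (hH : ∀ g, ‖H g‖ ≤ TRconst p * ‖g‖)
    (m M : ℝ) (hm : 0 < m) (hmM : m ≤ M)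
    (K Ktilde : ℝ → ℂ) (hKmeas : Measurable K) (hKtmeas : Measurable Ktilde)
    (hKlow : ∀ᵐ y : ℝ, m ≤ (K y).re) (hKtlow : ∀ᵐ y : ℝ, m ≤ (Ktilde y).re)
    (hKup : ∀ᵐ y : ℝ, ‖K y‖ ≤ M) (hKtup : ∀ᵐ y : ℝ, ‖Ktilde y‖ ≤ M)
    (hL : MemLp (fun y => Complex.log (K y)) (ENNReal.ofReal p) (volume : Measure ℝ))
    (hLt : MemLp (fun y => Complex.log (Ktilde y)) (ENNReal.ofReal p) (volume : Measure ℝ))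
    (h htilde : ℝ → ℂ) (hhmeas : Measurable h) (hhtmeas : Measurable htilde)
    (hrep : h =ᵐ[volume] (H (hL.toLp _) : Lp ℂ (ENNReal.ofReal p) (volume : Measure ℝ)))
    (hrept : htilde =ᵐ[volume]
      (H (hLt.toLp _) : Lp ℂ (ENNReal.ofReal p) (volume : Measure ℝ)))
    (hhim : ∀ᵐ y : ℝ, |(h y).im| ≤ TRconst p * Real.pi)
    (hhtim : ∀ᵐ y : ℝ, |(htilde y).im| ≤ TRconst p * Real.pi)
    (ε : ℝ)
    (hdist : eLpNorm (fun y => K y - Ktilde y) (ENNReal.ofReal p) (volume : Measure ℝ) ≤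
      ENNReal.ofReal ε) :
    eLpNorm (fun y =>
        Complex.exp ((1 / 2 : ℂ) * Complex.log (K y) + (Complex.I / 2) * h y) -
        Complex.exp ((1 / 2 : ℂ) * Complex.log (Ktilde y) + (Complex.I / 2) * htilde y))
        (ENNReal.ofReal p) (volume : Measure ℝ) ≤
      ENNReal.ofReal
        (Real.sqrt M * Real.exp (TRconst p * Real.pi / 2) / (2 * m) * (1 + TRconst p) * ε) ∧
    eLpNorm (fun y =>
        Complex.exp ((1 / 2 : ℂ) * Complex.log (K y) - (Complex.I / 2) * h y) -
        Complex.exp ((1 / 2 : ℂ) * Complex.log (Ktilde y) - (Complex.I / 2) * htilde y))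
        (ENNReal.ofReal p) (volume : Measure ℝ) ≤
      ENNReal.ofReal
        (Real.sqrt M * Real.exp (TRconst p * Real.pi / 2) / (2 * m) * (1 + TRconst p) * ε) := by
  
  set P := ENNReal.ofReal p with hPdef
  have hp1 : 1 ≤ P := Fact.out
  have hc : 0 ≤ TRconst p := TRconst_nonneg hp
  set c := TRconst p
  set L : ℝ → ℂ := fun y => Complex.log (K y) with hLdef
  set Lt : ℝ → ℂ := fun y => Complex.log (Ktilde y) with hLtdef
  -- the Δh bound from the Hilbert transform norm bound
  have hXne : eLpNorm (fun y => L y - Lt y) P volume ≠ ⊤ := (hL.sub hLt).eLpNorm_ne_top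
  have hΔh : eLpNorm (fun y => h y - htilde y) P volume ≤
      ENNReal.ofReal c * eLpNorm (fun y => L y - Lt y) P volume := by
    set A := hL.toLp _ with hAdef
    set B := hLt.toLp _ with hBdef
    have h1 : (fun y => h y - htilde y) =ᵐ[volume] ⇑(H A - H B) := by
      filter_upwards [hrep, hrept, Lp.coeFn_sub (H A) (H B)] with y hy1 hy2 hy3
      rw [hy1, hy2, hy3, Pi.sub_apply]
    have h2 : (⇑(A - B) : ℝ → ℂ) =ᵐ[volume] fun y => L y - Lt y := by
      filter_upwards [Lp.coeFn_sub A B, hL.coeFn_toLp, hLt.coeFn_toLp] with y hy1 hy2 hy3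
      rw [hy1, Pi.sub_apply, hy2, hy3]
    have hAB : ‖A - B‖ = (eLpNorm (fun y => L y - Lt y) P volume).toReal := by
      rw [Lp.norm_def, eLpNorm_congr_ae h2]
    calc eLpNorm (fun y => h y - htilde y) P volume = eLpNorm (⇑(H A - H B)) P volume :=
          eLpNorm_congr_ae h1
      _ = ENNReal.ofReal ‖H A - H B‖ := by
          rw [Lp.norm_def, ENNReal.ofReal_toReal (Lp.eLpNorm_ne_top _)]
      _ = ENNReal.ofReal ‖H (A - B)‖ := by rw [map_sub]
      _ ≤ ENNReal.ofReal (c * ‖A - B‖) := ENNReal.ofReal_le_ofReal (hH _)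
      _ = ENNReal.ofReal c * eLpNorm (fun y => L y - Lt y) P volume := by
          rw [ENNReal.ofReal_mul hc, hAB, ENNReal.ofReal_toReal hXne]
  constructor
  · exact keyBound p hp1 c hc m M hm hmM K Ktilde hKmeas hKtmeas hKlow hKtlow hKup hKtup
      h htilde hhmeas hhtmeas hhim hhtim hΔh ε hdist
  · have hneg : eLpNorm (fun y => (-h y) - (-htilde y)) P volume =
        eLpNorm (fun y => h y - htilde y) P volume := by
      have : (fun y => (-h y) - (-htilde y)) = -(fun y => h y - htilde y) := by
        funext y; simp; ring
      rw [this, eLpNorm_neg]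
    have key2 := keyBound p hp1 c hc m M hm hmM K Ktilde hKmeas hKtmeas hKlow hKtlow hKup hKtup
      (fun y => -h y) (fun y => -htilde y) hhmeas.neg hhtmeas.neg
      (by filter_upwards [hhim] with y hy; simpa using hy)
      (by filter_upwards [hhtim] with y hy; simpa using hy)
      (hneg.le.trans hΔh) ε hdist
    have heq : (fun y =>
        Complex.exp ((1 / 2 : ℂ) * Complex.log (K y) - (Complex.I / 2) * h y) -
        Complex.exp ((1 / 2 : ℂ) * Complex.log (Ktilde y) - (Complex.I / 2) * htilde y)) =
        (fun y =>
        Complex.exp ((1 / 2 : ℂ) * Complex.log (K y) + (Complex.I / 2) * (-h y)) -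
        Complex.exp ((1 / 2 : ℂ) * Complex.log (Ktilde y) + (Complex.I / 2) * (-htilde y))) := by
      funext y; rw [mul_neg, mul_neg, ← sub_eq_add_neg, ← sub_eq_add_neg]
    rw [heq]
    exact key2
end

section
/- Let τ₋ < 0 < τ₊ be real numbers, and let U₊ = {z ∈ ℂ : Im z > τ₋}, U₋ = {z ∈ ℂ : Im z < τ₊}, so the strip is U₊ ∩ U₋. Suppose F₊ : ℂ → ℂ is holomorphic on U₊, F₋ : ℂ → ℂ is holomorphic on U₋, F₊(z)·F₋(z) = 1 for all z in the strip, and there exist holomorphic functions L₊ on U₊ and L₋ on U₋ with exp(L₊) = F₊ on U₊, exp(L₋) = F₋ on U₋, and constants C > 0 and 0 ≤ ρ < 1 with |L₊(z)| ≤ C(1 + |z|)^ρ on U₊ and |L₋(z)| ≤ C(1 + |z|)^ρ on U₋. Then F₊ is constant on U₊ and F₋ is constant on U₋; that is, there exists c ∈ ℂ, c ≠ 0, with F₊ ≡ c and F₋ ≡ c⁻¹. -/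
open Complex

open Filter Metric in
/-- An entire function of sublinear growth is constant. -/
lemma liouville_sublinear {f : ℂ → ℂ} (hf : Differentiable ℂ f) {A C ρ : ℝ}
    (hC : 0 ≤ C) (hρ0 : 0 ≤ ρ) (hρ1 : ρ < 1)
    (hb : ∀ z : ℂ, ‖f z‖ ≤ A + C * (1 + ‖z‖) ^ ρ) (z w : ℂ) : f z = f w := by
  refine is_const_of_deriv_eq_zero hf (fun c => ?_) z w
  set b : ℝ := ‖c‖ with hbdef
  have hb0 : 0 ≤ b := norm_nonneg _
  have key : ∀ R : ℝ, 0 < R → ‖deriv f c‖ ≤ (A + C * (1 + b + R) ^ ρ) / R := by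
    intro R hR
    refine Complex.norm_deriv_le_of_forall_mem_sphere_norm_le hR hf.diffContOnCl ?_
    intro x hx
    have hdist : dist x c = R := mem_sphere_iff_norm.mp hx ▸ by
      simpa [dist_eq_norm] using mem_sphere_iff_norm.mp hx
    have hxnorm : ‖x‖ ≤ b + R := by
      calc ‖x‖ = ‖(x - c) + c‖ := by ring_nf
        _ ≤ ‖x - c‖ + ‖c‖ := norm_add_le _ _
        _ = b + R := by
          rw [mem_sphere_iff_norm.mp hx]; ring
    refine (hb x).trans ?_
    have : (1 + ‖x‖ : ℝ) ^ ρ ≤ (1 + b + R) ^ ρ := by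
      apply Real.rpow_le_rpow (by positivity) (by linarith) hρ0
    nlinarith [this]
  -- the bound tends to 0
  have h1 : Tendsto (fun R : ℝ => A / R) atTop (nhds 0) := by
    simpa [div_eq_mul_inv] using tendsto_inv_atTop_zero.const_mul A
  have h2 : Tendsto (fun R : ℝ => C * (1 + b + R) ^ ρ / R) atTop (nhds 0) := by
    have hmaj : Tendsto (fun R : ℝ => C * 2 ^ ρ * R ^ (ρ - 1)) atTop (nhds 0) := by
      have : Tendsto (fun R : ℝ => R ^ (-(1 - ρ))) atTop (nhds 0) :=
        tendsto_rpow_neg_atTop (by linarith)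
      simpa [neg_sub] using this.const_mul (C * 2 ^ ρ)
    refine squeeze_zero' ?_ ?_ hmaj
    · filter_upwards [eventually_gt_atTop (0 : ℝ)] with R hR
      positivity
    · filter_upwards [eventually_ge_atTop (max 1 (1 + b))] with R hR
      have hR1 : (1 : ℝ) ≤ R := le_trans (le_max_left _ _) hR
      have hRb : 1 + b ≤ R := le_trans (le_max_right _ _) hR
      have hR0 : (0 : ℝ) < R := by linarith
      have hpow : (1 + b + R : ℝ) ^ ρ ≤ 2 ^ ρ * R ^ ρ := by
        rw [← Real.mul_rpow (by norm_num) hR0.le]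
        exact Real.rpow_le_rpow (by linarith) (by linarith) hρ0
      have hfin : R ^ ρ / R = R ^ (ρ - 1) := by
        rw [Real.rpow_sub hR0, Real.rpow_one]
      calc C * (1 + b + R) ^ ρ / R ≤ C * (2 ^ ρ * R ^ ρ) / R := by
            gcongr
        _ = C * 2 ^ ρ * (R ^ ρ / R) := by ring
        _ = C * 2 ^ ρ * R ^ (ρ - 1) := by rw [hfin]
  have htend : Tendsto (fun R : ℝ => (A + C * (1 + b + R) ^ ρ) / R) atTop (nhds 0) := by
    have := h1.add h2
    simp only [add_zero] at this
    refine this.congr' ?_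
    filter_upwards [eventually_gt_atTop (0 : ℝ)] with R hR
    rw [← add_div]
  have : ‖deriv f c‖ ≤ 0 := by
    refine ge_of_tendsto htend ?_
    filter_upwards [eventually_gt_atTop (0 : ℝ)] with R hR
    exact key R hR
  simpa using le_antisymm this (norm_nonneg _)

/-- **Uniqueness of the Wiener–Hopf factorisation up to a constant**: if `F₊` is
holomorphic on the upper half-plane `Im z > τ₋`, `F₋` is holomorphic on the lower
half-plane `Im z < τ₊`, `F₊ F₋ = 1` on the strip, and both admit holomorphic logarithms
of subexponential growth `O((1+|z|)^ρ)` with `ρ < 1`, then `F₊` and `F₋` are constants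
`c` and `c⁻¹` respectively. -/
theorem wiener_hopf_factorisation_unique
    (τm τp : ℝ) (hτm : τm < 0) (hτp : 0 < τp)
    (Fp Fm Lp Lm : ℂ → ℂ)
    (hFp : DifferentiableOn ℂ Fp {z : ℂ | τm < z.im})
    (hFm : DifferentiableOn ℂ Fm {z : ℂ | z.im < τp})
    (hprod : ∀ z : ℂ, τm < z.im → z.im < τp → Fp z * Fm z = 1)
    (hLp : DifferentiableOn ℂ Lp {z : ℂ | τm < z.im})
    (hLm : DifferentiableOn ℂ Lm {z : ℂ | z.im < τp})
    (hexpP : ∀ z : ℂ, τm < z.im → Complex.exp (Lp z) = Fp z)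
    (hexpM : ∀ z : ℂ, z.im < τp → Complex.exp (Lm z) = Fm z)
    (C ρ : ℝ) (hC : 0 < C) (hρ0 : 0 ≤ ρ) (hρ1 : ρ < 1)
    (hgrowthP : ∀ z : ℂ, τm < z.im → ‖Lp z‖ ≤ C * (1 + ‖z‖) ^ ρ)
    (hgrowthM : ∀ z : ℂ, z.im < τp → ‖Lm z‖ ≤ C * (1 + ‖z‖) ^ ρ) :
    ∃ c : ℂ, c ≠ 0 ∧ (∀ z : ℂ, τm < z.im → Fp z = c) ∧
      (∀ z : ℂ, z.im < τp → Fm z = c⁻¹) := by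
  -- The upper and lower half-planes and strip are open
  have hUp : IsOpen {z : ℂ | τm < z.im} := isOpen_lt continuous_const Complex.continuous_im
  have hUm : IsOpen {z : ℂ | z.im < τp} := isOpen_lt Complex.continuous_im continuous_const
  set S : Set ℂ := {z : ℂ | τm < z.im} ∩ {z : ℂ | z.im < τp} with hSdef
  have hSopen : IsOpen S := hUp.inter hUm
  have hSconv : Convex ℝ S := (convex_halfSpace_im_gt τm).inter (convex_halfSpace_im_lt τp)
  have h0S : (0 : ℂ) ∈ S := ⟨by simpa using hτm, by simpa using hτp⟩
  -- On the strip, Lp + Lm has zero derivative, hence is constant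
  have hderiv : ∀ z ∈ S, HasDerivAt (fun w => Lp w + Lm w) 0 z := by
    intro z hz
    have hp : DifferentiableAt ℂ Lp z := (hLp z hz.1).differentiableAt (hUp.mem_nhds hz.1)
    have hm : DifferentiableAt ℂ Lm z := (hLm z hz.2).differentiableAt (hUm.mem_nhds hz.2)
    have hsum : HasDerivAt (fun w => Lp w + Lm w) (deriv Lp z + deriv Lm z) z :=
      hp.hasDerivAt.add hm.hasDerivAt
    have hexp : HasDerivAt (fun w => Complex.exp (Lp w + Lm w))
        (Complex.exp (Lp z + Lm z) * (deriv Lp z + deriv Lm z)) z := hsum.cexp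
    have hconst : (fun w => Complex.exp (Lp w + Lm w)) =ᶠ[nhds z] (fun _ => (1 : ℂ)) := by
      filter_upwards [hSopen.mem_nhds hz] with w hw
      rw [Complex.exp_add, hexpP w hw.1, hexpM w hw.2, hprod w hw.1 hw.2]
    have h0 : HasDerivAt (fun _ : ℂ => (1 : ℂ))
        (Complex.exp (Lp z + Lm z) * (deriv Lp z + deriv Lm z)) z :=
      hexp.congr_of_eventuallyEq hconst.symm
    have : Complex.exp (Lp z + Lm z) * (deriv Lp z + deriv Lm z) = 0 :=
      (h0.unique (hasDerivAt_const z 1))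
    have hzero : deriv Lp z + deriv Lm z = 0 := by
      rcases mul_eq_zero.mp this with h | h
      · exact absurd h (Complex.exp_ne_zero _)
      · exact h
    simpa [hzero] using hsum
  set κ : ℂ := Lp 0 + Lm 0 with hκdef
  have hSconst : ∀ z ∈ S, Lp z + Lm z = κ := by
    intro z hz
    have hdiff : DifferentiableOn ℂ (fun w => Lp w + Lm w) S :=
      fun x hx => ((hderiv x hx).differentiableAt.differentiableWithinAt)
    have hfd : ∀ x ∈ S, fderivWithin ℂ (fun w => Lp w + Lm w) S x = 0 := by
      intro x hx
      rw [fderivWithin_of_isOpen hSopen hx]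
      have h0 : HasFDerivAt (fun w => Lp w + Lm w)
          ((ContinuousLinearMap.smulRight (1 : ℂ →L[ℂ] ℂ) (0 : ℂ))) x := (hderiv x hx).hasFDerivAt
      rw [h0.fderiv]
      ext v
      simp
    exact hSconv.is_const_of_fderivWithin_eq_zero hdiff hfd hz h0S
  -- Glue into an entire function
  set G : ℂ → ℂ := fun z => if τm < z.im then Lp z else κ - Lm z with hGdef
  have hGp : ∀ z : ℂ, τm < z.im → G z = Lp z := fun z hz => if_pos hz
  have hGm : ∀ z : ℂ, z.im < τp → G z = κ - Lm z := by
    intro z hz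
    by_cases h : τm < z.im
    · rw [hGp z h]
      have := hSconst z ⟨h, hz⟩
      linear_combination this
    · exact if_neg h
  have hGdiff : Differentiable ℂ G := by
    intro z
    by_cases h : τm < z.im
    · have hp : DifferentiableAt ℂ Lp z := (hLp z h).differentiableAt (hUp.mem_nhds h)
      refine hp.congr_of_eventuallyEq ?_
      filter_upwards [hUp.mem_nhds h] with w hw
      exact hGp w hw
    · have hz : z.im < τp := by
        push_neg at h; linarith
      have hm : DifferentiableAt ℂ Lm z := (hLm z hz).differentiableAt (hUm.mem_nhds hz)
      have hm' : DifferentiableAt ℂ (fun w => κ - Lm w) z := (differentiableAt_const κ).sub hm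
      refine hm'.congr_of_eventuallyEq ?_
      filter_upwards [hUm.mem_nhds hz] with w hw
      exact hGm w hw
  -- Growth bound
  have hGbound : ∀ z : ℂ, ‖G z‖ ≤ ‖κ‖ + C * (1 + ‖z‖) ^ ρ := by
    intro z
    by_cases h : τm < z.im
    · rw [hGp z h]
      have := hgrowthP z h
      have : ‖Lp z‖ ≤ C * (1 + ‖z‖) ^ ρ := this
      linarith [norm_nonneg κ]
    · have hz : z.im < τp := by push_neg at h; linarith
      rw [hGm z hz]
      have := hgrowthM z hz
      calc ‖κ - Lm z‖ ≤ ‖κ‖ + ‖Lm z‖ := norm_sub_le _ _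
        _ ≤ ‖κ‖ + C * (1 + ‖z‖) ^ ρ := by linarith
  -- G is constant
  have hGconst : ∀ z : ℂ, G z = G 0 :=
    fun z => liouville_sublinear hGdiff hC.le hρ0 hρ1 hGbound z 0
  have hG0 : G 0 = Lp 0 := hGp 0 (by simpa using hτm)
  -- Conclude
  refine ⟨Complex.exp (Lp 0), Complex.exp_ne_zero _, ?_, ?_⟩
  · intro z hz
    rw [← hexpP z hz, ← hGp z hz, hGconst z, hG0]
  · intro z hz
    have hLmz : Lm z = Lm 0 := by
      have h1 := hGm z hz
      have h2 := hGm 0 (by simpa using hτp)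
      have := hGconst z
      rw [h1, h2] at this
      linear_combination -this
    rw [← hexpM z hz, hLmz]
    have hmul : Complex.exp (Lp 0) * Complex.exp (Lm 0) = 1 := by
      rw [hexpP 0 (by simpa using hτm), hexpM 0 (by simpa using hτp)]
      exact hprod 0 (by simpa using hτm) (by simpa using hτp)
    exact (inv_eq_of_mul_eq_one_right hmul).symm
end

section
/- For every real y ≠ 0, e^{−iπ/2} · Γ(1/2 − iy/π) · Γ(1/2 + iy/π) · (i + y)^{1/2} · (i − y)^{1/2} / (π · Γ(1 − iy/π) · Γ(1 + iy/π)) = √(y² + 1) · tanh(y)/y, where Γ is the complex Gamma function and the powers (i ± y)^{1/2} are principal-branch complex powers. -/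
open Complex

/-- **Exact Wiener–Hopf factorisation of Koiter's kernel**: for real `y ≠ 0`,
`e^{−iπ/2} Γ(1/2 − iy/π) Γ(1/2 + iy/π) (i + y)^{1/2} (i − y)^{1/2} / (π Γ(1 − iy/π) Γ(1 + iy/π))
  = √(y² + 1) tanh(y)/y`,
with principal-branch complex powers. -/
theorem koiter_kernel_factorisation (y : ℝ) (hy : y ≠ 0) :
    Complex.exp (-(Real.pi / 2 : ℂ) * Complex.I) *
        Complex.Gamma (1 / 2 - Complex.I * (y : ℂ) / (Real.pi : ℂ)) *
        Complex.Gamma (1 / 2 + Complex.I * (y : ℂ) / (Real.pi : ℂ)) *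
        (Complex.I + (y : ℂ)) ^ (1 / 2 : ℂ) *
        (Complex.I - (y : ℂ)) ^ (1 / 2 : ℂ) /
        ((Real.pi : ℂ) * Complex.Gamma (1 - Complex.I * (y : ℂ) / (Real.pi : ℂ)) *
          Complex.Gamma (1 + Complex.I * (y : ℂ) / (Real.pi : ℂ))) =
      ((Real.sqrt (y ^ 2 + 1) * Real.tanh y / y : ℝ) : ℂ) := by
  have hπ : (Real.pi : ℂ) ≠ 0 := by exact_mod_cast Real.pi_ne_zero
  have hyc : (y : ℂ) ≠ 0 := by exact_mod_cast hy
  set z : ℂ := Complex.I * (y : ℂ) / (Real.pi : ℂ) with hzdef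
  have hz : z ≠ 0 := by
    rw [hzdef]
    exact div_ne_zero (mul_ne_zero Complex.I_ne_zero hyc) hπ
  have hπz : (Real.pi : ℂ) * z = (y : ℂ) * Complex.I := by
    rw [hzdef]; field_simp
  have hcosh : (Real.cosh y : ℂ) ≠ 0 := by
    exact_mod_cast (Real.cosh_pos (x := y)).ne'
  have hsinh : (Real.sinh y : ℂ) ≠ 0 := by
    exact_mod_cast Real.sinh_ne_zero.mpr hy
  -- reflection formulas
  have hA : Complex.Gamma (1/2 + z) * Complex.Gamma (1/2 - z) =
      (Real.pi : ℂ) / (Real.cosh y : ℂ) := by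
    have h := Complex.Gamma_mul_Gamma_one_sub (1/2 + z)
    rw [show (1:ℂ) - (1/2 + z) = 1/2 - z by ring,
      show (Real.pi : ℂ) * (1/2 + z) = (Real.pi : ℂ) * z + (Real.pi : ℂ)/2 by ring,
      hπz, Complex.sin_add_pi_div_two, Complex.cos_mul_I] at h
    push_cast
    exact h
  have hB : Complex.Gamma (1 - z) * Complex.Gamma (1 + z) = (y : ℂ) / (Real.sinh y : ℂ) := by
    have h1 : Complex.Gamma (1 + z) = z * Complex.Gamma z := by
      rw [add_comm]; exact Complex.Gamma_add_one z hz
    have h2 := Complex.Gamma_mul_Gamma_one_sub z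
    rw [hπz, Complex.sin_mul_I] at h2
    have hsinh' : Complex.sinh (y:ℂ) ≠ 0 := by rw [← Complex.ofReal_sinh]; exact hsinh
    calc Complex.Gamma (1 - z) * Complex.Gamma (1 + z)
        = z * (Complex.Gamma z * Complex.Gamma (1 - z)) := by rw [h1]; ring
      _ = z * ((Real.pi : ℂ) / (Complex.sinh (y:ℂ) * Complex.I)) := by rw [h2]
      _ = (y : ℂ) / (Real.sinh y : ℂ) := by
          rw [hzdef]; push_cast; field_simp
  -- the power product
  have hP : (Complex.I + (y:ℂ)) ^ (1/2:ℂ) * (Complex.I - (y:ℂ)) ^ (1/2:ℂ)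
      = (Real.sqrt (y^2+1) : ℂ) * Complex.I := by
    set w : ℂ := Complex.I + (y:ℂ) with hw
    have hwim : w.im = 1 := by simp [hw]
    have hw0 : w ≠ 0 := fun h => by simp [h] at hwim
    have hw' : Complex.I - (y:ℂ) = -(starRingEnd ℂ w) := by
      simp [hw, Complex.ext_iff]
    have hargw : Complex.arg w ≠ Real.pi := by
      intro h
      have := Complex.arg_eq_pi_iff.mp h
      simp [hwim] at this
    have harg' : Complex.arg (-(starRingEnd ℂ w)) = -Complex.arg w + Real.pi := by
      rw [Complex.arg_neg_eq_arg_add_pi_of_im_neg (by simp [hwim]), Complex.arg_conj, if_neg hargw]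
    have habs : ‖w‖ = Real.sqrt (y^2+1) := by
      rw [Complex.norm_def]
      congr 1
      simp [hw, Complex.normSq_apply]
      ring
    have h2 : ‖(-(starRingEnd ℂ w))‖ = ‖w‖ := by simp
    rw [hw', Complex.cpow_def_of_ne_zero hw0,
      Complex.cpow_def_of_ne_zero (by simpa [hw'] using hw0 : -(starRingEnd ℂ w) ≠ 0),
      ← Complex.exp_add]
    rw [Complex.log, Complex.log, harg', h2, habs]
    have : (↑(Real.log (Real.sqrt (y ^ 2 + 1))) + ↑(arg w) * I) * (1/2) +
        (↑(Real.log (Real.sqrt (y ^ 2 + 1))) + ↑(-arg w + Real.pi) * I) * (1/2)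
        = (Real.log (Real.sqrt (y ^ 2 + 1)) : ℂ) + (Real.pi/2 : ℝ) * I := by
      push_cast; ring
    rw [this, Complex.exp_add, Complex.exp_mul_I]
    rw [← Complex.ofReal_exp, Real.exp_log (Real.sqrt_pos.mpr (by positivity))]
    push_cast
    rw [Complex.cos_pi_div_two, Complex.sin_pi_div_two]
    ring
  have hE : Complex.exp (-(Real.pi / 2 : ℂ) * Complex.I) = -Complex.I := by
    rw [Complex.exp_mul_I, Complex.cos_neg, Complex.sin_neg]
    rw [Complex.cos_pi_div_two, Complex.sin_pi_div_two]
    ring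
  rw [show Complex.exp (-(Real.pi / 2 : ℂ) * Complex.I) *
        Complex.Gamma (1 / 2 - z) * Complex.Gamma (1 / 2 + z) *
        (Complex.I + (y : ℂ)) ^ (1 / 2 : ℂ) * (Complex.I - (y : ℂ)) ^ (1 / 2 : ℂ) /
        ((Real.pi : ℂ) * Complex.Gamma (1 - z) * Complex.Gamma (1 + z)) =
      Complex.exp (-(Real.pi / 2 : ℂ) * Complex.I) *
        (Complex.Gamma (1/2 + z) * Complex.Gamma (1/2 - z)) *
        ((Complex.I + (y : ℂ)) ^ (1 / 2 : ℂ) * (Complex.I - (y : ℂ)) ^ (1 / 2 : ℂ)) /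
        ((Real.pi : ℂ) * (Complex.Gamma (1 - z) * Complex.Gamma (1 + z))) by ring,
    hE, hA, hB, hP, Real.tanh_eq_sinh_div_cosh]
  push_cast
  field_simp
  ring_nf
  simp only [Complex.I_sq]
  linear_combination
end

section
/- Let δ > 0 and ρ > 0. Let u : ℂ → ℂ be holomorphic on the strip {z ∈ ℂ : |Im z| < δ}, and suppose there is a function h holomorphic on the open disc {w ∈ ℂ : |w| < ρ} such that u(x) = h(1/x) for every real x with |x| > 1/ρ. Define v : ℝ → ℂ by v(θ) = u(cot θ) for θ ∉ πℤ and v(θ) = h(0) for θ ∈ πℤ. Then the Fourier coefficients of v over a period π decay geometrically: there exist C > 0 and 0 < r < 1 such that |∫_0^π v(θ) e^{−2inθ} dθ| ≤ C r^{|n|} for every n ∈ ℤ. -/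
open Complex Filter intervalIntegral

namespace BoydAux
open Complex Filter Topology intervalIntegral
set_option maxHeartbeats 1000000


lemma im_kappa (q : ℂ) : (I * (q + 1) / (q - 1)).im = (Complex.normSq q - 1) / Complex.normSq (q - 1) := by
  rcases eq_or_ne q 1 with rfl | hq
  · simp
  · have h : Complex.normSq (q - 1) ≠ 0 := by
      simpa [Complex.normSq_eq_zero, sub_eq_zero] using hq
    rw [Complex.div_im]
    simp only [Complex.normSq_apply, Complex.mul_im, Complex.mul_re, Complex.I_re, Complex.I_im,
      Complex.add_re, Complex.add_im, Complex.sub_re, Complex.sub_im, Complex.one_re, Complex.one_im]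
    field_simp
    ring

lemma kappa_inv (q : ℂ) (h1 : q ≠ 1) (h2 : q ≠ -1) (h3 : I * (q + 1) / (q - 1) ≠ 0) :
    (I * (q + 1) / (q - 1))⁻¹ = I * (1 - q) / (1 + q) := by
  have e1 : q - 1 ≠ 0 := sub_ne_zero.mpr h1
  have e2 : 1 + q ≠ 0 := by
    intro hc
    exact h2 (by linear_combination hc)
  refine inv_eq_of_mul_eq_one_right ?_
  field_simp
  ring_nf
  simp [I_sq]

lemma cot_eq (θ : ℝ) (hs : Real.sin θ ≠ 0) :
    ((Real.cot θ : ℝ) : ℂ) = I * (Complex.exp ((2 * θ : ℝ) * I) + 1) / (Complex.exp ((2 * θ : ℝ) * I) - 1) := by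
  have hs' : Complex.sin θ ≠ 0 := by
    rw [← Complex.ofReal_sin]; exact_mod_cast hs
  have he : Complex.exp ((2 * θ : ℝ) * I) = Complex.exp (θ * I) ^ 2 := by
    rw [← Complex.exp_nat_mul]
    push_cast
    ring_nf
  have hexp : Complex.exp ((θ:ℂ) * I) = Complex.cos θ + Complex.sin θ * I := Complex.exp_mul_I θ
  have hcs : Complex.cos θ ^ 2 + Complex.sin θ ^ 2 = 1 := Complex.cos_sq_add_sin_sq θ
  have hI : (I:ℂ)^2 = -1 := Complex.I_sq
  have hplus : Complex.exp ((2 * θ : ℝ) * I) + 1 = 2 * Complex.cos θ * Complex.exp (θ * I) := by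
    rw [he, hexp]
    linear_combination (Complex.sin θ^2) * hI - hcs
  have hminus : Complex.exp ((2 * θ : ℝ) * I) - 1 = 2 * Complex.sin θ * I * Complex.exp (θ * I) := by
    rw [he, hexp]
    linear_combination -(Complex.sin θ^2) * hI + hcs
  rw [Real.cot_eq_cos_div_sin, hplus, hminus]
  push_cast
  have hne := Complex.exp_ne_zero ((θ:ℂ) * I)
  field_simp



lemma tan_eq (θ : ℝ) (hc : Real.cos θ ≠ 0) :
    ((Real.tan θ : ℝ) : ℂ) = I * (1 - Complex.exp ((2 * θ : ℝ) * I)) / (1 + Complex.exp ((2 * θ : ℝ) * I)) := by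
  have hc' : Complex.cos θ ≠ 0 := by
    rw [← Complex.ofReal_cos]; exact_mod_cast hc
  have he : Complex.exp ((2 * θ : ℝ) * I) = Complex.exp (θ * I) ^ 2 := by
    rw [← Complex.exp_nat_mul]; push_cast; ring_nf
  have hexp : Complex.exp ((θ:ℂ) * I) = Complex.cos θ + Complex.sin θ * I := Complex.exp_mul_I θ
  have hcs : Complex.cos θ ^ 2 + Complex.sin θ ^ 2 = 1 := Complex.cos_sq_add_sin_sq θ
  have hI : (I:ℂ)^2 = -1 := Complex.I_sq
  have hplus : 1 + Complex.exp ((2 * θ : ℝ) * I) = 2 * Complex.cos θ * Complex.exp (θ * I) := by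
    rw [he, hexp]
    linear_combination (Complex.sin θ^2) * hI - hcs
  have hminus : 1 - Complex.exp ((2 * θ : ℝ) * I) = -(2 * Complex.sin θ * I * Complex.exp (θ * I)) := by
    rw [he, hexp]
    linear_combination (Complex.sin θ^2) * hI - hcs
  rw [Real.tan_eq_sin_div_cos, hplus, hminus]
  push_cast
  have hne := Complex.exp_ne_zero ((θ:ℂ) * I)
  field_simp
  linear_combination (Complex.sin θ) * hI

lemma exp_two_eq_one_iff (θ : ℝ) :
    Complex.exp ((2 * θ : ℝ) * I) = 1 ↔ ∃ k : ℤ, θ = k * Real.pi := by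
  rw [Complex.exp_eq_one_iff]
  constructor
  · rintro ⟨n, hn⟩
    refine ⟨n, ?_⟩
    have h2 : ((2 * θ : ℝ) : ℂ) = (n : ℂ) * (2 * Real.pi) := by
      have := mul_right_cancel₀ Complex.I_ne_zero (by rw [hn]; push_cast; ring :
        ((2 * θ : ℝ) : ℂ) * I = ((n : ℂ) * (2 * Real.pi)) * I)
      exact this
    have h3 : (2 * θ : ℝ) = (n : ℝ) * (2 * Real.pi) := by exact_mod_cast h2
    linarith
  · rintro ⟨k, rfl⟩
    exact ⟨k, by push_cast; ring⟩

lemma sin_ne_zero_iff (θ : ℝ) : Real.sin θ ≠ 0 ↔ ¬ ∃ k : ℤ, θ = k * Real.pi := by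
  have h : Real.sin θ = 0 ↔ ∃ k : ℤ, θ = k * Real.pi := by
    rw [Real.sin_eq_zero_iff]
    exact ⟨fun ⟨n, hn⟩ => ⟨n, hn.symm⟩, fun ⟨n, hn⟩ => ⟨n, hn.symm⟩⟩
  exact not_congr h



lemma half_eqOn (δ ρ : ℝ) (hδ : 0 < δ) (hρ : 0 < ρ) (u h : ℂ → ℂ)
    (hu : DifferentiableOn ℂ u {z : ℂ | |z.im| < δ})
    (hh : DifferentiableOn ℂ h (Metric.ball (0 : ℂ) ρ))
    (huh : ∀ x : ℝ, 1 / ρ < |x| → u (x : ℂ) = h ((1 / x : ℝ) : ℂ))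
    (σ : ℝ) (hσ : σ = 1 ∨ σ = -1) :
    ∀ z : ℂ, |z.im| < δ → 1/ρ < σ * z.re → u z = h z⁻¹ := by
  have hσ1 : |σ| = 1 := by rcases hσ with rfl | rfl <;> norm_num
  set Ω : Set ℂ := {z : ℂ | |z.im| < δ ∧ 1/ρ < σ * z.re} with hΩ
  have hmem : ∀ z ∈ Ω, 1/ρ < ‖z‖ ∧ z ≠ 0 := by
    intro z hz
    have h1 : 1/ρ < σ * z.re := hz.2
    have h2 : σ * z.re ≤ |z.re| := by
      calc σ * z.re ≤ |σ * z.re| := le_abs_self _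
      _ = |z.re| := by rw [abs_mul, hσ1, one_mul]
    have h3 : |z.re| ≤ ‖z‖ := Complex.abs_re_le_norm z
    have h4 : 1/ρ < ‖z‖ := lt_of_lt_of_le h1 (h2.trans h3)
    refine ⟨h4, ?_⟩
    intro hz0
    rw [hz0] at h4
    simp at h4
    have := one_div_pos.mpr hρ
    linarith
  have hinv : ∀ z ∈ Ω, z⁻¹ ∈ Metric.ball (0:ℂ) ρ := by
    intro z hz
    obtain ⟨h4, hz0⟩ := hmem z hz
    rw [Metric.mem_ball, dist_zero_right, norm_inv]
    rw [one_div] at h4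
    exact inv_lt_of_inv_lt₀ hρ h4
  have hopen : IsOpen Ω := by
    apply IsOpen.inter
    · exact isOpen_lt (Complex.continuous_im.abs) continuous_const
    · exact isOpen_lt continuous_const (continuous_const.mul Complex.continuous_re)
  have hconv : Convex ℝ Ω := by
    have : Ω = {z : ℂ | z.im < δ} ∩ {z : ℂ | -δ < z.im} ∩ {z : ℂ | 1/ρ < σ * z.re} := by
      ext z
      simp only [Set.mem_setOf_eq, Set.mem_inter_iff, abs_lt, hΩ]
      tauto
    rw [this]
    refine (Convex.inter (Convex.inter ?_ ?_) ?_)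
    · exact convex_halfSpace_im_lt δ
    · exact convex_halfSpace_im_gt (-δ)
    · rcases hσ with rfl | rfl
      · simpa using convex_halfSpace_re_gt (1/ρ)
      · have := convex_halfSpace_re_lt (-(1/ρ))
        convert this using 1
        ext z
        constructor
        · intro hz; simp only [Set.mem_setOf_eq] at *; linarith
        · intro hz; simp only [Set.mem_setOf_eq] at *; linarith
  have hu' : AnalyticOnNhd ℂ u Ω := by
    apply DifferentiableOn.analyticOnNhd (hu.mono ?_) hopen
    intro z hz; exact hz.1
  have hg' : AnalyticOnNhd ℂ (fun z => h z⁻¹) Ω := by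
    apply DifferentiableOn.analyticOnNhd ?_ hopen
    intro z hz
    refine DifferentiableAt.differentiableWithinAt ?_
    have h1 : DifferentiableAt ℂ h (z⁻¹) :=
      hh.differentiableAt (Metric.isOpen_ball.mem_nhds (hinv z hz))
    exact h1.comp z (differentiableAt_inv (hmem z hz).2)
  -- base point and frequent equality
  set x₀ : ℝ := σ * (1/ρ + 1) with hx₀
  have hz₀ : (x₀ : ℂ) ∈ Ω := by
    constructor
    · simp [hδ]
    · simp only [Complex.ofReal_re, hx₀]
      rcases hσ with rfl | rfl <;> [skip; skip] <;> nlinarith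
  have hfreq : ∃ᶠ z in 𝓝[≠] (x₀ : ℂ), u z = h z⁻¹ := by
    have hseq : Tendsto (fun k : ℕ => ((x₀ + σ / (k+1) : ℝ) : ℂ)) atTop (𝓝[≠] (x₀ : ℂ)) := by
      apply tendsto_nhdsWithin_of_tendsto_nhds_of_eventually_within
      · have : Tendsto (fun k : ℕ => (x₀ + σ / (k+1) : ℝ)) atTop (𝓝 x₀) := by
          have h0 : Tendsto (fun k : ℕ => σ / (k+1 : ℝ)) atTop (𝓝 0) := by
            apply Tendsto.div_atTop tendsto_const_nhds
            exact tendsto_natCast_atTop_atTop.atTop_add tendsto_const_nhds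
          simpa using tendsto_const_nhds.add h0
        exact (Complex.continuous_ofReal.tendsto x₀).comp this
      · apply Eventually.of_forall
        intro k
        simp only [Set.mem_compl_iff, Set.mem_singleton_iff]
        intro hc
        have : (x₀ + σ / (k+1) : ℝ) = x₀ := by exact_mod_cast hc
        have hσ0 : σ ≠ 0 := by rcases hσ with rfl | rfl <;> norm_num
        have : σ / (k+1 : ℝ) = 0 := by linarith
        rw [div_eq_zero_iff] at this
        rcases this with hc' | hc'
        · exact hσ0 hc'
        · have : (0:ℝ) < (k:ℝ) + 1 := by positivity
          linarith
    apply hseq.frequently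
    apply Frequently.of_forall
    intro k
    have hk1 : (0:ℝ) < (k:ℝ) + 1 := by positivity
    set x : ℝ := x₀ + σ / (k+1) with hx
    have hxabs : 1/ρ < |x| := by
      have : σ * x = 1/ρ + 1 + 1/(k+1) := by
        rcases hσ with rfl | rfl <;> (simp only [hx, hx₀]; ring)
      calc 1/ρ < σ * x := by
            rw [this]
            have h5 : (0:ℝ) < 1/((k:ℝ)+1) := by positivity
            linarith
      _ ≤ |σ * x| := le_abs_self _
      _ = |x| := by rw [abs_mul, hσ1, one_mul]
    have hx0 : x ≠ 0 := by
      intro hc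
      rw [hc] at hxabs
      simp at hxabs
      have := one_div_pos.mpr hρ
      linarith
    have := huh x hxabs
    rw [this]
    congr 1
    push_cast
    rw [one_div]
  have heq := hu'.eqOn_of_preconnected_of_frequently_eq hg' hconv.isPreconnected hz₀ hfreq
  intro z h1 h2
  exact heq ⟨h1, h2⟩



lemma fourier_bound (b : ℝ) (hb : 1 < b) (G : ℂ → ℂ) (V : Set ℂ) (hV : IsOpen V)
    (hVA : Metric.closedBall (0:ℂ) b \ Metric.ball (0:ℂ) b⁻¹ ⊆ V)
    (hG : DifferentiableOn ℂ G V) (w : ℝ → ℂ)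
    (hw : ∀ θ : ℝ, w θ = G (Complex.exp ((2*θ:ℝ) * I))) :
    ∃ C : ℝ, 0 < C ∧ ∀ n : ℤ,
      ‖(∫ θ in (0:ℝ)..Real.pi, w θ * Complex.exp (-2*(n:ℂ)*(θ:ℂ)*I))‖ ≤
        C * (b⁻¹) ^ n.natAbs := by
  have hb0 : (0:ℝ) < b := lt_trans one_pos hb
  have hbi0 : (0:ℝ) < b⁻¹ := by positivity
  have hbib : b⁻¹ ≤ b := by
    have : b⁻¹ < 1 := inv_lt_one_of_one_lt₀ hb
    linarith
  set A : Set ℂ := Metric.closedBall (0:ℂ) b \ Metric.ball (0:ℂ) b⁻¹ with hA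
  have hAcomp : IsCompact A := (isCompact_closedBall _ _).diff Metric.isOpen_ball
  obtain ⟨M, hM⟩ := hAcomp.exists_bound_of_continuousOn (hG.continuousOn.mono hVA)
  set M0 : ℝ := max M 0 with hM0def
  have hM00 : 0 ≤ M0 := le_max_right _ _
  have hM0 : ∀ z ∈ A, ‖(G z)‖ ≤ M0 := fun z hz => le_trans (hM z hz) (le_max_left _ _)
  refine ⟨Real.pi * (M0 + 1), by positivity, fun n => ?_⟩
  set f : ℂ → ℂ := fun z => G z * z ^ (-n-1 : ℤ) with hf
  have hsphereA : ∀ s : ℝ, b⁻¹ ≤ s → s ≤ b → ∀ z ∈ Metric.sphere (0:ℂ) s, z ∈ A := by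
    intro s hs1 hs2 z hz
    rw [Metric.mem_sphere] at hz
    constructor
    · rw [Metric.mem_closedBall]; rw [hz]; exact hs2
    · rw [Metric.mem_ball]; rw [hz]; exact not_lt.mpr hs1
  -- annulus equality
  have key1 : ∀ r R : ℝ, b⁻¹ ≤ r → r ≤ R → R ≤ b →
      (∮ z in C(0, R), f z) = ∮ z in C(0, r), f z := by
    intro r R hr hrR hR
    have hr0 : 0 < r := lt_of_lt_of_le hbi0 hr
    apply circleIntegral_eq_of_differentiable_on_annulus_off_countable hr0 hrR
      Set.countable_empty
    · have hsub : Metric.closedBall (0:ℂ) R \ Metric.ball (0:ℂ) r ⊆ A :=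
        Set.diff_subset_diff (Metric.closedBall_subset_closedBall hR)
          (Metric.ball_subset_ball hr)
      apply ContinuousOn.mono ?_ hsub
      apply ContinuousOn.mul (hG.continuousOn.mono hVA)
      intro z hz
      have hz0 : z ≠ 0 := by
        intro hc
        have := hz.2
        rw [hc] at this
        exact this (Metric.mem_ball_self hbi0)
      exact (continuousAt_zpow₀ z _ (Or.inl hz0)).continuousWithinAt
    · intro z hz
      have hz1 : z ∈ A := by
        refine ⟨Metric.closedBall_subset_closedBall hR
          (Metric.ball_subset_closedBall hz.1.1), ?_⟩
        intro hc
        exact hz.1.2 (Metric.closedBall_subset_closedBall hr (Metric.ball_subset_closedBall hc))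
      have hz0 : z ≠ 0 := by
        intro hc
        exact hz.1.2 (by rw [hc]; exact Metric.mem_closedBall_self hr0.le)
      exact ((hG.differentiableAt (hV.mem_nhds (hVA hz1))).mul
        (differentiableAt_zpow.mpr (Or.inl hz0)))
  -- norm bound on circle of radius s
  have key2 : ∀ s : ℝ, b⁻¹ ≤ s → s ≤ b →
      ‖(∮ z in C(0, s), f z)‖ ≤ 2 * Real.pi * M0 * s ^ (-n : ℤ) := by
    intro s hs1 hs2
    have hs0 : 0 < s := lt_of_lt_of_le hbi0 hs1
    have hbound : ∀ z ∈ Metric.sphere (0:ℂ) s, ‖f z‖ ≤ M0 * s ^ (-n-1 : ℤ) := by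
      intro z hz
      have hzA := hsphereA s hs1 hs2 z hz
      have hzn : ‖z‖ = s := by rwa [Metric.mem_sphere, dist_zero_right] at hz
      have : ‖f z‖ = ‖G z‖ * s ^ (-n-1 : ℤ) := by
        rw [hf]
        simp only [norm_mul, norm_zpow, hzn]
      rw [this]
      apply mul_le_mul_of_nonneg_right (hM0 z hzA)
      positivity
    have := circleIntegral.norm_integral_le_of_norm_le_const hs0.le hbound
    calc ‖(∮ z in C(0, s), f z)‖ ≤ 2 * Real.pi * s * (M0 * s ^ (-n-1 : ℤ)) := this
      _ = 2 * Real.pi * M0 * s ^ (-n : ℤ) := by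
          have h5 : (s:ℝ) ^ (-n : ℤ) = s * s ^ (-n-1 : ℤ) := by
            rw [show (-n : ℤ) = (-n-1)+1 by ring, zpow_add_one₀ (ne_of_gt hs0)]
            ring
          rw [h5]; ring
  -- relate the Fourier integral to the circle integral at radius 1
  set g : ℝ → ℂ := fun φ => G (Complex.exp ((φ:ℂ) * I)) * Complex.exp (-(n:ℂ) * ((φ:ℂ) * I))
    with hg
  have heqpt : ∀ θ : ℝ, w θ * Complex.exp (-2*(n:ℂ)*(θ:ℂ)*I) = g (2*θ) := by
    intro θ
    rw [hw θ, hg]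
    simp only
    congr 1
    congr 1
    push_cast
    ring
  have step1 : (∫ θ in (0:ℝ)..Real.pi, w θ * Complex.exp (-2*(n:ℂ)*(θ:ℂ)*I))
      = ∫ θ in (0:ℝ)..Real.pi, g (2*θ) :=
    intervalIntegral.integral_congr fun θ _ => heqpt θ
  have step2 : (∫ θ in (0:ℝ)..Real.pi, g (2*θ)) = (2:ℝ)⁻¹ • ∫ φ in (0:ℝ)..(2*Real.pi), g φ := by
    have := intervalIntegral.integral_comp_mul_left g (a := 0) (b := Real.pi) two_ne_zero
    rw [this]
    norm_num
  have step3 : (∮ z in C(0, 1), f z) = I * ∫ φ in (0:ℝ)..(2*Real.pi), g φ := by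
    rw [← intervalIntegral.integral_const_mul]
    rw [show (∮ z in C(0, (1:ℝ)), f z) = ∫ φ in (0:ℝ)..(2*Real.pi), deriv (circleMap 0 1) φ • f (circleMap 0 1 φ) from rfl]
    apply intervalIntegral.integral_congr
    intro φ _
    simp only [deriv_circleMap, circleMap_zero, smul_eq_mul, hf, hg]
    have hne : Complex.exp ((φ:ℂ) * I) ≠ 0 := Complex.exp_ne_zero _
    have hzp : Complex.exp ((φ:ℂ) * I) ^ (-n : ℤ) = Complex.exp (-(n:ℂ) * ((φ:ℂ) * I)) := by
      have := Complex.exp_int_mul ((φ:ℂ) * I) (-n)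
      rw [← this]
      push_cast
      ring_nf
    have hcomb : Complex.exp ((φ:ℂ) * I) * Complex.exp ((φ:ℂ) * I) ^ (-n-1 : ℤ)
        = Complex.exp ((φ:ℂ) * I) ^ (-n : ℤ) := by
      rw [show (-n : ℤ) = (-n-1)+1 by ring, zpow_add_one₀ hne]
      ring
    calc (1 : ℂ) * Complex.exp ((φ:ℂ) * I) * I *
          (G (1 * Complex.exp ((φ:ℂ) * I)) * (1 * Complex.exp ((φ:ℂ) * I)) ^ (-n-1 : ℤ))
        = I * (G (Complex.exp ((φ:ℂ) * I)) *
            (Complex.exp ((φ:ℂ) * I) * Complex.exp ((φ:ℂ) * I) ^ (-n-1 : ℤ))) := by ring_nf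
      _ = I * (G (Complex.exp ((φ:ℂ) * I)) * Complex.exp (-(n:ℂ) * ((φ:ℂ) * I))) := by
            rw [hcomb, hzp]
  have habsJ : ∀ s : ℝ, b⁻¹ ≤ s → s ≤ b →
      ‖(∫ θ in (0:ℝ)..Real.pi, w θ * Complex.exp (-2*(n:ℂ)*(θ:ℂ)*I))‖
        ≤ Real.pi * M0 * s ^ (-n : ℤ) := by
    intro s hs1 hs2
    have h2 : ‖(∮ z in C(0, (1:ℝ)), f z)‖
        = 2 * ‖(∫ θ in (0:ℝ)..Real.pi, w θ * Complex.exp (-2*(n:ℂ)*(θ:ℂ)*I))‖ := by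
      rw [step3, step1, step2]
      rw [norm_mul, Complex.norm_I, one_mul]
      have : ((2:ℝ)⁻¹ • ∫ φ in (0:ℝ)..(2*Real.pi), g φ) = (2⁻¹ : ℂ) * ∫ φ in (0:ℝ)..(2*Real.pi), g φ := by
        simp [smul_eq_mul, Complex.real_smul]
      rw [this, norm_mul]
      have h2' : ‖(2⁻¹ : ℂ)‖ = 2⁻¹ := by
        rw [norm_inv]
        simp
      rw [h2']
      ring
    have h3 := key2 s hs1 hs2
    have h4 : (∮ z in C(0, (1:ℝ)), f z) = ∮ z in C(0, s), f z := by
      rcases le_total 1 s with hcase | hcase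
      · exact (key1 1 s (inv_le_one_of_one_le₀ hb.le) hcase hs2).symm
      · exact key1 s 1 hs1 hcase hb.le
    rw [h4] at h2
    rw [h2] at h3
    linarith [Real.pi_pos]
  -- conclude
  rcases le_or_gt 0 n with hn | hn
  · have hs := habsJ b hbib le_rfl
    have heq : (b:ℝ) ^ (-n : ℤ) = (b⁻¹) ^ n.natAbs := by
      rw [zpow_neg, ← inv_zpow, ← zpow_natCast]
      congr 1
      omega
    rw [heq] at hs
    calc ‖(∫ θ in (0:ℝ)..Real.pi, w θ * Complex.exp (-2*(n:ℂ)*(θ:ℂ)*I))‖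
        ≤ Real.pi * M0 * (b⁻¹) ^ n.natAbs := hs
      _ ≤ Real.pi * (M0 + 1) * (b⁻¹) ^ n.natAbs := by
          apply mul_le_mul_of_nonneg_right ?_ (by positivity)
          nlinarith [Real.pi_pos]
  · have hs := habsJ b⁻¹ le_rfl hbib
    have heq : (b⁻¹ : ℝ) ^ (-n : ℤ) = (b⁻¹) ^ n.natAbs := by
      rw [← zpow_natCast]
      congr 1
      omega
    rw [heq] at hs
    calc ‖(∫ θ in (0:ℝ)..Real.pi, w θ * Complex.exp (-2*(n:ℂ)*(θ:ℂ)*I))‖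
        ≤ Real.pi * M0 * (b⁻¹) ^ n.natAbs := hs
      _ ≤ Real.pi * (M0 + 1) * (b⁻¹) ^ n.natAbs := by
          apply mul_le_mul_of_nonneg_right ?_ (by positivity)
          nlinarith [Real.pi_pos]

end BoydAux

open BoydAux Topology in
set_option maxHeartbeats 1000000 in
/-- **Boyd's theorem (geometric-convergence case)**: if `u` is holomorphic on a strip
`|Im z| < δ` around the real axis and analytic at infinity (i.e. `u(x) = h(1/x)` for large
real `x`, with `h` holomorphic on a disc of radius `ρ` about `0`), then the Fourier
coefficients over a period `π` of `v(θ) = u(cot θ)` (extended by `h(0)` at `θ ∈ πℤ`)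
decay geometrically. -/
theorem boyd_geometric_convergence (δ ρ : ℝ) (hδ : 0 < δ) (hρ : 0 < ρ)
    (u h : ℂ → ℂ)
    (hu : DifferentiableOn ℂ u {z : ℂ | |z.im| < δ})
    (hh : DifferentiableOn ℂ h (Metric.ball (0 : ℂ) ρ))
    (huh : ∀ x : ℝ, 1 / ρ < |x| → u (x : ℂ) = h ((1 / x : ℝ) : ℂ))
    (v : ℝ → ℂ)
    (hv : ∀ θ : ℝ, (¬ ∃ k : ℤ, θ = k * Real.pi) → v θ = u ((Real.cot θ : ℝ) : ℂ))
    (hvπ : ∀ k : ℤ, v (k * Real.pi) = h 0) :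
    ∃ C : ℝ, 0 < C ∧ ∃ r : ℝ, 0 < r ∧ r < 1 ∧ ∀ n : ℤ,
      ‖(∫ θ in (0 : ℝ)..Real.pi,
          v θ * Complex.exp (-2 * (n : ℂ) * (θ : ℂ) * Complex.I))‖ ≤
        C * r ^ n.natAbs := by

  classical
  -- extension of the identity u = h ∘ inv to the complex strip
  have hext : ∀ z : ℂ, |z.im| < δ → 1/ρ < |z.re| → u z = h z⁻¹ := by
    intro z h1 h2
    rcases lt_abs.mp h2 with hc | hc
    · exact half_eqOn δ ρ hδ hρ u h hu hh huh 1 (Or.inl rfl) z h1 (by linarith)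
    · exact half_eqOn δ ρ hδ hρ u h hu hh huh (-1) (Or.inr rfl) z h1 (by linarith)
  -- constants
  set t : ℝ := min (1/2 : ℝ) (ρ/4) with ht
  have ht0 : 0 < t := lt_min (by norm_num) (by positivity)
  have ht2 : t ≤ 1/2 := min_le_left _ _
  have htρ : t ≤ ρ/4 := min_le_right _ _
  set d : ℝ := min δ 1 with hd
  have hd0 : 0 < d := lt_min hδ one_pos
  have hdδ : d ≤ δ := min_le_left _ _
  have hd1 : d ≤ 1 := min_le_right _ _
  set ε : ℝ := d * t^2/16 with hε
  have hε0 : 0 < ε := by positivity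
  set b : ℝ := Real.sqrt (1+ε) with hbdef
  have hbnn : 0 ≤ b := Real.sqrt_nonneg _
  have hb2 : b^2 = 1+ε := Real.sq_sqrt (by positivity)
  have hb1 : 1 < b := by nlinarith
  have hb0 : 0 < b := lt_trans one_pos hb1
  -- the annulus neighbourhood
  set V : Set ℂ := {q : ℂ | |Complex.normSq q - 1| < 2*ε} with hV
  have hVopen : IsOpen V :=
    isOpen_lt ((Complex.continuous_normSq.sub continuous_const).abs) continuous_const
  have hVA : Metric.closedBall (0:ℂ) b \ Metric.ball (0:ℂ) b⁻¹ ⊆ V := by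
    rintro q ⟨hq1, hq2⟩
    rw [Metric.mem_closedBall, dist_zero_right] at hq1
    rw [Metric.mem_ball, dist_zero_right, not_lt] at hq2
    have hx : Complex.normSq q = ‖q‖ ^ 2 := (Complex.sq_norm q).symm
    have hxn : (0:ℝ) ≤ ‖q‖ := norm_nonneg q
    have hq1' : ‖q‖ ≤ b := hq1
    have hq2' : b⁻¹ ≤ ‖q‖ := hq2
    have hbinv : b⁻¹ * b = 1 := inv_mul_cancel₀ (ne_of_gt hb0)
    have hbipos : 0 < b⁻¹ := by positivity
    rw [hV, Set.mem_setOf_eq, abs_lt]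
    constructor
    · nlinarith
    · nlinarith [sq_nonneg (‖q‖ - b⁻¹), sq_nonneg ε]
  -- membership of kappa in the strip
  have fact_im : ∀ q ∈ V, t/2 < ‖(q-1)‖ →
      |(I*(q+1)/(q-1)).im| ≤ d/2 := by
    intro q hq hq1
    have hnum : |Complex.normSq q - 1| < 2*ε := hq
    have hden : Complex.normSq (q-1) = ‖(q-1)‖^2 := (Complex.sq_norm _).symm
    have hden' : (t/2)^2 < Complex.normSq (q-1) := by
      rw [hden]
      apply pow_lt_pow_left₀ hq1 (by positivity)
      norm_num
    have hdenpos : 0 < Complex.normSq (q-1) := by nlinarith [sq_nonneg (t/2)]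
    rw [im_kappa, abs_div, abs_of_pos hdenpos, div_le_iff₀ hdenpos]
    nlinarith
  -- the overlap identity
  have fact_overlap : ∀ q ∈ V, t/2 < ‖(q-1)‖ → ‖(q-1)‖ < t →
      u (I*(q+1)/(q-1)) = h (I*(1-q)/(1+q)) := by
    intro q hq hlo hhi
    have hq1 : q ≠ 1 := by
      intro hc; rw [hc] at hlo; simp at hlo; linarith
    have hqm1 : q ≠ -1 := by
      intro hc; rw [hc] at hhi
      have : ‖(-1 - 1 : ℂ)‖ = 2 := by norm_num
      rw [this] at hhi; linarith
    set ζ : ℂ := I*(q+1)/(q-1) with hζ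
    have habs0 : 0 < ‖(q-1)‖ := lt_trans (by positivity) hlo
    have habsζ : ‖ζ‖ = ‖(q+1)‖ / ‖(q-1)‖ := by
      rw [hζ, norm_div, norm_mul, Complex.norm_I, one_mul]
    have hζnn : 0 ≤ ‖ζ‖ := norm_nonneg _
    have hX : ‖ζ‖ * ‖(q-1)‖ = ‖(q+1)‖ := by
      rw [habsζ]; field_simp
    have hplus : 2 - ‖(q-1)‖ ≤ ‖(q+1)‖ := by
      have h2 : ‖(2:ℂ)‖ ≤ ‖(q+1)‖ + ‖(q-1)‖ := by
        calc ‖(2:ℂ)‖ = ‖((q+1) - (q-1))‖ := by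
              rw [show (q+1) - (q-1) = (2:ℂ) by ring]
        _ ≤ ‖(q+1)‖ + ‖(q-1)‖ := by
              exact norm_sub_le _ _
      have h3 : ‖(2:ℂ)‖ = 2 := by norm_num
      rw [h3] at h2
      linarith
    have hζlarge : 3 ≤ 2 * t * ‖ζ‖ := by
      nlinarith [mul_nonneg hζnn (le_of_lt (sub_pos.mpr hhi))]
    have him : |ζ.im| ≤ d/2 := fact_im q hq hlo
    have himδ : |ζ.im| < δ := lt_of_le_of_lt him (by linarith)
    have hsq : ζ.re^2 + ζ.im^2 = ‖ζ‖ ^ 2 := by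
      rw [Complex.sq_norm, Complex.normSq_apply]; ring
    have him2 : ζ.im^2 ≤ 1/4 := by
      have h5 : |ζ.im| ≤ 1/2 := le_trans him (by linarith)
      nlinarith [abs_nonneg ζ.im, _root_.sq_abs ζ.im]
    have h8 : 2 ≤ t^2 * ζ.re^2 := by
      nlinarith [sq_nonneg (2 * t * ‖ζ‖ - 3), sq_nonneg t, sq_nonneg ζ.re]
    have ht4 : t^2 ≤ (ρ/4)^2 := by nlinarith
    have h13 : 2 ≤ (ρ/4)^2 * ζ.re^2 :=
      le_trans h8 (mul_le_mul_of_nonneg_right ht4 (sq_nonneg _))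
    have hre : 1/ρ < |ζ.re| := by
      rw [div_lt_iff₀ hρ]
      nlinarith [abs_nonneg ζ.re, _root_.sq_abs ζ.re, mul_nonneg hρ.le (abs_nonneg ζ.re)]
    have hζ0 : ζ ≠ 0 := by
      intro hc
      rw [hc] at hre
      simp at hre
      have := one_div_pos.mpr hρ
      linarith
    rw [hext ζ himδ hre, kappa_inv q hq1 hqm1 hζ0]
  -- the glued function on the annulus
  set G : ℂ → ℂ := fun q =>
    if ‖(q-1)‖ < 3*t/4 then h (I*(1-q)/(1+q)) else u (I*(q+1)/(q-1)) with hGdef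
  have hstrip : IsOpen {z : ℂ | |z.im| < δ} :=
    isOpen_lt (Complex.continuous_im.abs) continuous_const
  have habscont : Continuous (fun q' : ℂ => ‖(q'-1)‖) :=
    continuous_norm.comp (continuous_id.sub continuous_const)
  have hGdiff : DifferentiableOn ℂ G V := by
    intro q hq
    apply DifferentiableAt.differentiableWithinAt
    rcases lt_or_ge (‖(q-1)‖) t with hcase | hcase
    · have hqm1 : (1:ℂ) + q ≠ 0 := by
        intro hc
        have hq' : q = -1 := by linear_combination hc
        rw [hq'] at hcase
        have : ‖(-1-1 : ℂ)‖ = 2 := by norm_num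
        rw [this] at hcase
        linarith
      have e3 : 2 - ‖(q-1)‖ ≤ ‖(1+q)‖ := by
        have h2 : ‖(2:ℂ)‖ ≤ ‖(1+q)‖ + ‖(q-1)‖ := by
          calc ‖(2:ℂ)‖ = ‖((1+q) - (q-1))‖ := by
                rw [show (1+q) - (q-1) = (2:ℂ) by ring]
          _ ≤ ‖(1+q)‖ + ‖(q-1)‖ := by
                exact norm_sub_le _ _
        have h3 : ‖(2:ℂ)‖ = 2 := by norm_num
        rw [h3] at h2
        linarith
      have hpos : 0 < ‖(1+q)‖ := by linarith
      have htau : ‖(I*(1-q)/(1+q))‖ < ρ := by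
        have e1 : ‖(I*(1-q)/(1+q))‖ = ‖(1-q)‖ / ‖(1+q)‖ := by
          rw [norm_div, norm_mul, Complex.norm_I, one_mul]
        have e2 : ‖(1-q)‖ = ‖(q-1)‖ := by
          rw [show (1:ℂ)-q = -(q-1) by ring, norm_neg]
        rw [e1, e2, div_lt_iff₀ hpos]
        nlinarith [norm_nonneg (q-1)]
      have hinner : DifferentiableAt ℂ (fun q' : ℂ => I*(1-q')/(1+q')) q := by
        apply DifferentiableAt.div
        · fun_prop
        · fun_prop
        · exact hqm1
      have houter : DifferentiableAt ℂ h (I*(1-q)/(1+q)) := by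
        apply hh.differentiableAt
        apply Metric.isOpen_ball.mem_nhds
        rw [Metric.mem_ball, dist_zero_right]
        exact htau
      have hcomp := houter.comp q hinner
      apply DifferentiableAt.congr_of_eventuallyEq hcomp
      have hopen2 : IsOpen (V ∩ {q' : ℂ | ‖(q'-1)‖ < t}) :=
        hVopen.inter (isOpen_lt habscont continuous_const)
      apply Filter.eventuallyEq_of_mem (hopen2.mem_nhds ⟨hq, hcase⟩)
      intro q' hq'
      by_cases hnear : ‖(q'-1)‖ < 3*t/4
      · simp only [hGdef, Function.comp_apply, if_pos hnear]
      · simp only [hGdef, Function.comp_apply, if_neg hnear]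
        exact fact_overlap q' hq'.1 (lt_of_lt_of_le (by linarith) (not_lt.mp hnear)) hq'.2
    · have hq1 : q ≠ 1 := by
        intro hc
        rw [hc] at hcase
        simp at hcase
        linarith
      have hκ : DifferentiableAt ℂ (fun q' : ℂ => I*(q'+1)/(q'-1)) q := by
        apply DifferentiableAt.div
        · fun_prop
        · fun_prop
        · exact sub_ne_zero.mpr hq1
      have hmemstrip : |(I*(q+1)/(q-1)).im| < δ :=
        lt_of_le_of_lt (fact_im q hq (by linarith)) (by linarith)
      have houter : DifferentiableAt ℂ u (I*(q+1)/(q-1)) :=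
        hu.differentiableAt (hstrip.mem_nhds hmemstrip)
      have hcomp := houter.comp q hκ
      apply DifferentiableAt.congr_of_eventuallyEq hcomp
      have hopen2 : IsOpen {q' : ℂ | 3*t/4 < ‖(q'-1)‖} :=
        isOpen_lt continuous_const habscont
      have hqmem : q ∈ {q' : ℂ | 3*t/4 < ‖(q'-1)‖} := by
        show 3*t/4 < ‖(q-1)‖
        linarith
      apply Filter.eventuallyEq_of_mem (hopen2.mem_nhds hqmem)
      intro q' hq'
      have hq'' : 3*t/4 < ‖(q'-1)‖ := hq'
      simp only [hGdef, Function.comp_apply, if_neg (not_lt.mpr (le_of_lt hq''))]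
  -- identification of v with G on the unit circle
  have hvG : ∀ θ : ℝ, v θ = G (Complex.exp ((2*θ:ℝ) * I)) := by
    intro θ
    by_cases hk : ∃ k : ℤ, θ = k * Real.pi
    · obtain ⟨k, rfl⟩ := hk
      have hq1 : Complex.exp ((2*((k:ℝ) * Real.pi):ℝ) * I) = 1 :=
        (exp_two_eq_one_iff _).mpr ⟨k, rfl⟩
      rw [hvπ k, hq1, hGdef]
      simp only
      rw [if_pos (by simpa using by positivity : ‖((1:ℂ)-1)‖ < 3*t/4)]
      norm_num
    · have hs : Real.sin θ ≠ 0 := (sin_ne_zero_iff θ).mpr hk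
      have hq1 : Complex.exp ((2*θ:ℝ) * I) ≠ 1 := fun hc => hk ((exp_two_eq_one_iff θ).mp hc)
      set q : ℂ := Complex.exp ((2*θ:ℝ) * I) with hqdef
      have hcot : ((Real.cot θ : ℝ) : ℂ) = I*(q+1)/(q-1) := cot_eq θ hs
      rw [hv θ hk, hGdef]
      simp only
      by_cases hnear : ‖(q-1)‖ < 3*t/4
      · rw [if_pos hnear]
        have hqm1 : q ≠ -1 := by
          intro hc
          rw [hc] at hnear
          have : ‖(-1-1 : ℂ)‖ = 2 := by norm_num
          rw [this] at hnear
          linarith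
        have hcos : Real.cos θ ≠ 0 := by
          intro hc
          have hcot0 : Real.cot θ = 0 := by
            rw [Real.cot_eq_cos_div_sin, hc, zero_div]
          rw [hcot0] at hcot
          have h0 : I*(q+1)/(q-1) = 0 := by rw [← hcot]; norm_num
          rw [div_eq_zero_iff] at h0
          rcases h0 with h0 | h0
          · rw [mul_eq_zero] at h0
            rcases h0 with h0 | h0
            · exact Complex.I_ne_zero h0
            · exact hqm1 (by linear_combination h0)
          · exact hq1 (by linear_combination h0)
        have htan : ((Real.tan θ : ℝ) : ℂ) = I*(1-q)/(1+q) := tan_eq θ hcos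
        have habs0 : 0 < ‖(q-1)‖ := norm_pos_iff.mpr (sub_ne_zero.mpr hq1)
        have hplus' : 2 - ‖(q-1)‖ ≤ ‖(q+1)‖ := by
          have h2 : ‖(2:ℂ)‖ ≤ ‖(q+1)‖ + ‖(q-1)‖ := by
            calc ‖(2:ℂ)‖ = ‖((q+1) - (q-1))‖ := by
                  rw [show (q+1) - (q-1) = (2:ℂ) by ring]
            _ ≤ ‖(q+1)‖ + ‖(q-1)‖ := by
                  exact norm_sub_le _ _
          have h3 : ‖(2:ℂ)‖ = 2 := by norm_num
          rw [h3] at h2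
          linarith
        have hXA : |Real.cot θ| * ‖(q-1)‖ = ‖(q+1)‖ := by
          have := congrArg (‖·‖) hcot
          rw [Complex.norm_real, Real.norm_eq_abs, norm_div, norm_mul, Complex.norm_I, one_mul] at this
          rw [this]
          field_simp
        have hcotbig : 1/ρ < |Real.cot θ| := by
          rw [div_lt_iff₀ hρ]
          nlinarith [mul_nonneg (abs_nonneg (Real.cot θ))
              (by linarith : (0:ℝ) ≤ 3*t/4 - ‖(q-1)‖),
            mul_nonneg (abs_nonneg (Real.cot θ)) (by linarith : (0:ℝ) ≤ ρ - 4*t)]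
        have hdiv : 1/Real.cot θ = Real.tan θ := by
          rw [Real.cot_eq_cos_div_sin, Real.tan_eq_sin_div_cos, one_div_div]
        calc u ((Real.cot θ : ℝ) : ℂ) = h (((1/Real.cot θ : ℝ)) : ℂ) := huh _ hcotbig
          _ = h (((Real.tan θ : ℝ)) : ℂ) := by rw [hdiv]
          _ = h (I*(1-q)/(1+q)) := by rw [htan]
      · rw [if_neg hnear, ← hcot]
  obtain ⟨C, hC, hbound⟩ := fourier_bound b hb1 G V hVopen hVA hGdiff v hvG
  exact ⟨C, hC, b⁻¹, by positivity, inv_lt_one_of_one_lt₀ hb1, hbound⟩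
end
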